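/- Fix 0 < s < 1 and define J_s(r,r̃) = (r/r̃)·min{1, ((3-s)r̃-2)/((1-s)r-2)} on the rectangle K(s) = [2, 6/(3-4s)_+] × [max{1, 6/(7-4s)}, 2/(2-s)] (with 6/0 interpreted as ∞). Then sup_{(r,r̃)∈K(s)} J_s(r,r̃) equals (3-s)/(1-s) if 1/2 ≤ s < 1, equals (7-4s)/(3-4s) if 1/4 ≤ s ≤ 1/2, and equals 6/(3-4s) if 0 < s ≤ 1/4. -/

import Mathlib

/-- The rectangle `K(s) = [2, 6/(3-4s)₊] × [max{1, 6/(7-4s)}, 2/(2-s)]`,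
where the upper bound `6/(3-4s)₊` is interpreted as `∞` (no constraint)
when `s ≥ 3/4`. -/
def Krect (s : ℝ) : Set (ℝ × ℝ) :=
  {p | 2 ≤ p.1 ∧ (s < 3 / 4 → p.1 ≤ 6 / (3 - 4 * s)) ∧
    max 1 (6 / (7 - 4 * s)) ≤ p.2 ∧ p.2 ≤ 2 / (2 - s)}

/-- `J_s(r,r̃) = (r/r̃)·min{1, ((3-s)r̃-2)/((1-s)r-2)}`. -/
noncomputable def Jfun (s : ℝ) (p : ℝ × ℝ) : ℝ :=
  (p.1 / p.2) * min 1 (((3 - s) * p.2 - 2) / ((1 - s) * p.1 - 2))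

/-- The supremum of `J_s` over `K(s)` equals `(3-s)/(1-s)` for `1/2 ≤ s < 1`,
`(7-4s)/(3-4s)` for `1/4 ≤ s ≤ 1/2`, and `6/(3-4s)` for `0 < s ≤ 1/4`. -/
theorem sup_Jfun (s : ℝ) (hs : 0 < s) (hs1 : s < 1) :
    sSup (Jfun s '' Krect s) =
      if 1 / 2 ≤ s then (3 - s) / (1 - s)
      else if 1 / 4 ≤ s then (7 - 4 * s) / (3 - 4 * s)
      else 6 / (3 - 4 * s) := by
  have h1s : 0 < 1 - s := by linarith
  have h7s : 0 < 7 - 4 * s := by linarith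
  have h2s : 0 < 2 - s := by linarith
  split_ifs with hhalf hquart
  · -- 1/2 ≤ s
    apply IsGreatest.csSup_eq
    constructor
    · refine ⟨(6 * (3 - s) / ((1 - s) * (7 - 4 * s)), 6 / (7 - 4 * s)), ⟨?_, ?_, ?_, ?_⟩, ?_⟩
      · rw [le_div_iff₀ (by positivity)]; nlinarith
      · intro h34
        have h34' : 0 < 3 - 4 * s := by linarith
        rw [div_le_div_iff₀ (by positivity) h34']
        nlinarith
      · apply max_le
        · rw [le_div_iff₀ h7s]; linarith
        · exact le_refl _
      · rw [div_le_div_iff₀ h7s h2s]; linarith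
      · simp only [Jfun]
        have hD : (0:ℝ) < (1 - s) * (6 * (3 - s) / ((1 - s) * (7 - 4 * s))) - 2 := by
          rw [show (1 - s) * (6 * (3 - s) / ((1 - s) * (7 - 4 * s))) - 2
              = (4 + 2 * s) / (7 - 4 * s) by
              rw [mul_div_assoc', mul_div_mul_left _ _ h1s.ne', eq_div_iff h7s.ne', sub_mul,
                div_mul_cancel₀ _ h7s.ne']; ring]
          positivity
        have key : (3 - s) * (6 / (7 - 4 * s)) - 2
            = (1 - s) * (6 * (3 - s) / ((1 - s) * (7 - 4 * s))) - 2 := by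
          field_simp
        rw [key, div_self hD.ne', min_self, mul_one]
        rw [div_div_eq_mul_div, div_mul_eq_mul_div, div_div]
        rw [div_eq_div_iff (by positivity) h1s.ne']
        ring
    · rintro y ⟨⟨r, rt⟩, ⟨hr2, hru, hrtl, hrtu⟩, rfl⟩
      simp only [Jfun]
      have hrt1 : (1:ℝ) ≤ rt := le_trans (le_max_left _ _) hrtl
      have hrtpos : (0:ℝ) < rt := by linarith
      have hrpos : (0:ℝ) < r := by linarith
      have hrt6 : 6 / (7 - 4 * s) ≤ rt := le_trans (le_max_right _ _) hrtl
      rw [div_le_iff₀ h7s] at hrt6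
      have hN : 0 < (3 - s) * rt - 2 := by nlinarith
      rcases lt_trichotomy ((1 - s) * r - 2) 0 with hD | hD | hD
      · have hneg : ((3 - s) * rt - 2) / ((1 - s) * r - 2) < 0 :=
          div_neg_of_pos_of_neg hN hD
        have hmin : min 1 (((3 - s) * rt - 2) / ((1 - s) * r - 2)) ≤ 0 :=
          le_of_lt (lt_of_le_of_lt (min_le_right _ _) hneg)
        have : r / rt * min 1 (((3 - s) * rt - 2) / ((1 - s) * r - 2)) ≤ 0 :=
          mul_nonpos_of_nonneg_of_nonpos (div_nonneg hrpos.le hrtpos.le) hmin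
        have : (0:ℝ) ≤ (3 - s) / (1 - s) := div_nonneg (by linarith) h1s.le
        linarith
      · rw [hD, div_zero]
        have : min (1:ℝ) 0 = 0 := by norm_num
        rw [this, mul_zero]
        exact div_nonneg (by linarith) h1s.le
      · rcases le_total (((3 - s) * rt - 2) / ((1 - s) * r - 2)) 1 with hm | hm
        · rw [min_eq_right hm]
          rw [div_le_one hD] at hm
          rw [div_mul_div_comm, div_le_div_iff₀ (by positivity) h1s]
          nlinarith
        · rw [min_eq_left hm, mul_one]
          rw [one_le_div hD] at hm
          rw [div_le_div_iff₀ hrtpos h1s]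
          nlinarith
  · -- 1/4 ≤ s < 1/2
    have hlt : s < 1 / 2 := lt_of_not_ge hhalf
    have h34 : (0:ℝ) < 3 - 4 * s := by linarith
    apply IsGreatest.csSup_eq
    constructor
    · refine ⟨(6 / (3 - 4 * s), 6 / (7 - 4 * s)), ⟨?_, ?_, ?_, ?_⟩, ?_⟩
      · rw [le_div_iff₀ h34]; linarith
      · intro _; exact le_refl _
      · apply max_le
        · rw [le_div_iff₀ h7s]; linarith
        · exact le_refl _
      · rw [div_le_div_iff₀ h7s h2s]; linarith
      · simp only [Jfun]
        have hD : (0:ℝ) < (1 - s) * (6 / (3 - 4 * s)) - 2 := by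
          rw [show (1 - s) * (6 / (3 - 4 * s)) - 2 = (2 * s) / (3 - 4 * s) by
            rw [eq_div_iff h34.ne', sub_mul, mul_assoc, div_mul_cancel₀ _ h34.ne']; ring]
          positivity
        have hm : (1:ℝ) ≤ ((3 - s) * (6 / (7 - 4 * s)) - 2) / ((1 - s) * (6 / (3 - 4 * s)) - 2) := by
          rw [le_div_iff₀ hD, one_mul]
          rw [show (3 - s) * (6 / (7 - 4 * s)) - 2 = (4 + 2 * s) / (7 - 4 * s) by
            rw [eq_div_iff h7s.ne', sub_mul, mul_assoc, div_mul_cancel₀ _ h7s.ne']; ring]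
          rw [show (1 - s) * (6 / (3 - 4 * s)) - 2 = (2 * s) / (3 - 4 * s) by
            rw [eq_div_iff h34.ne', sub_mul, mul_assoc, div_mul_cancel₀ _ h34.ne']; ring]
          rw [div_le_div_iff₀ h34 h7s]
          nlinarith
        rw [min_eq_left hm, mul_one]
        rw [div_div_eq_mul_div, div_mul_eq_mul_div, div_div]
        rw [div_eq_div_iff (by positivity) h34.ne']
        ring
    · rintro y ⟨⟨r, rt⟩, ⟨hr2, hru, hrtl, hrtu⟩, rfl⟩
      simp only [Jfun]
      have hrt1 : (1:ℝ) ≤ rt := le_trans (le_max_left _ _) hrtl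
      have hrtpos : (0:ℝ) < rt := by linarith
      have hrpos : (0:ℝ) < r := by linarith
      have hrt6 : 6 / (7 - 4 * s) ≤ rt := le_trans (le_max_right _ _) hrtl
      rw [div_le_iff₀ h7s] at hrt6
      have hrub : r ≤ 6 / (3 - 4 * s) := hru (by linarith)
      rw [le_div_iff₀ h34] at hrub
      calc r / rt * min 1 (((3 - s) * rt - 2) / ((1 - s) * r - 2))
          ≤ r / rt * 1 :=
            mul_le_mul_of_nonneg_left (min_le_left _ _) (by positivity)
        _ = r / rt := mul_one _
        _ ≤ (7 - 4 * s) / (3 - 4 * s) := by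
            rw [div_le_div_iff₀ hrtpos h34]
            nlinarith
  · -- 0 < s < 1/4
    have hlt : s < 1 / 4 := lt_of_not_ge hquart
    have h34 : (0:ℝ) < 3 - 4 * s := by linarith
    apply IsGreatest.csSup_eq
    constructor
    · refine ⟨(6 / (3 - 4 * s), 1), ⟨?_, ?_, ?_, ?_⟩, ?_⟩
      · rw [le_div_iff₀ h34]; linarith
      · intro _; exact le_refl _
      · apply max_le
        · exact le_refl _
        · rw [div_le_one h7s]; linarith
      · rw [le_div_iff₀ h2s]; linarith
      · simp only [Jfun]
        have hD : (0:ℝ) < (1 - s) * (6 / (3 - 4 * s)) - 2 := by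
          rw [show (1 - s) * (6 / (3 - 4 * s)) - 2 = (2 * s) / (3 - 4 * s) by
            rw [eq_div_iff h34.ne', sub_mul, mul_assoc, div_mul_cancel₀ _ h34.ne']; ring]
          positivity
        have hm : (1:ℝ) ≤ ((3 - s) * 1 - 2) / ((1 - s) * (6 / (3 - 4 * s)) - 2) := by
          rw [le_div_iff₀ hD, one_mul]
          rw [show (1 - s) * (6 / (3 - 4 * s)) - 2 = (2 * s) / (3 - 4 * s) by
            rw [eq_div_iff h34.ne', sub_mul, mul_assoc, div_mul_cancel₀ _ h34.ne']; ring]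
          rw [show (3 - s) * 1 - 2 = 1 - s by ring]
          rw [div_le_iff₀ h34]
          nlinarith
        rw [min_eq_left hm, mul_one, div_one]
    · rintro y ⟨⟨r, rt⟩, ⟨hr2, hru, hrtl, hrtu⟩, rfl⟩
      simp only [Jfun]
      have hrt1 : (1:ℝ) ≤ rt := le_trans (le_max_left _ _) hrtl
      have hrtpos : (0:ℝ) < rt := by linarith
      have hrpos : (0:ℝ) < r := by linarith
      have hrub : r ≤ 6 / (3 - 4 * s) := hru (by linarith)
      calc r / rt * min 1 (((3 - s) * rt - 2) / ((1 - s) * r - 2))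
          ≤ r / rt * 1 :=
            mul_le_mul_of_nonneg_left (min_le_left _ _) (by positivity)
        _ = r / rt := mul_one _
        _ ≤ r := div_le_self (le_of_lt hrpos) hrt1
        _ ≤ 6 / (3 - 4 * s) := hrub
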